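/- Let p ≥ 5 and let s be a natural number with s ≥ (p − 1)/2. Then there exist symmetric positive definite p×p real matrices Ω₁ ≠ Ω₂, each having at most s nonzero entries in positions (i,j) with i < j, such that T(Ω₁) = T(Ω₂), where T(Ω) = ω1ᵀ + 1ωᵀ − 2Ω and ω ∈ ℝ^p is the diagonal vector of Ω. -/

import Mathlib

open Matrix

/-- The matrices in our construction: diagonal `c`, with row/column 0 given by `v`. -/
def VarMk (p : ℕ) (c v : Fin p → ℝ) : Matrix (Fin p) (Fin p) ℝ :=
  Matrix.of fun i j : Fin p =>
    if i = j then c i else if i.val = 0 then v j else if j.val = 0 then v i else 0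

lemma VarMk_posDef (p : ℕ) (hp : 5 ≤ p) (c v : Fin p → ℝ)
    (hc : ∀ i, (p : ℝ) ≤ c i) (hv0 : ∀ j : Fin p, j.val = 0 → v j = 0)
    (hv : ∀ j, |v j| ≤ 1/2) : (VarMk p c v).PosDef := by
  have hp0 : 0 < p := by omega
  set i0 : Fin p := ⟨0, hp0⟩ with hi0
  set e : Fin p → ℝ := fun i => if i.val = 0 then 1 else 0 with he
  have hM : VarMk p c v = Matrix.diagonal c + vecMulVec e v + vecMulVec v e := by
    ext i j
    simp only [VarMk, Matrix.of_apply, Matrix.add_apply, Matrix.diagonal_apply,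
      vecMulVec_apply, he]
    by_cases hij : i = j
    · subst hij
      by_cases h0 : i.val = 0
      · simp [h0, hv0 i h0]
      · simp [h0]
    · by_cases h0 : i.val = 0
      · have hj0 : ¬ j.val = 0 := fun h => hij (Fin.ext (h0.trans h.symm))
        simp [hij, h0, hj0, hv0 i h0]
      · by_cases hj0 : j.val = 0
        · simp [hij, h0, hj0, hv0 j hj0]
        · simp [hij, h0, hj0]
  rw [Matrix.posDef_iff_dotProduct_mulVec]
  constructor
  · rw [hM]
    ext i j
    simp only [Matrix.conjTranspose_apply, Matrix.add_apply, Matrix.diagonal_apply,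
      vecMulVec_apply, star_trivial]
    by_cases hij : i = j
    · subst hij; ring
    · have hji : ¬ j = i := fun h => hij h.symm
      simp [hij, hji]; ring
  · intro x hx
    have hmvv : ∀ a b : Fin p → ℝ, dotProduct (star x) (vecMulVec a b *ᵥ x)
        = (x ⬝ᵥ a) * (b ⬝ᵥ x) := by
      intro a b
      simp only [star_trivial, dotProduct, mulVec, vecMulVec_apply, dotProduct,
        Finset.mul_sum, Finset.sum_mul]
      rw [Finset.sum_comm]
      apply Finset.sum_congr rfl; intro j _
      apply Finset.sum_congr rfl; intro i _
      ring
    have hxe : x ⬝ᵥ e = x i0 := by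
      simp only [dotProduct, he]
      rw [Finset.sum_eq_single i0]
      · simp [hi0]
      · intro b _ hb
        have : ¬ b.val = 0 := fun h => hb (Fin.ext h)
        simp [this]
      · simp
    have hex : e ⬝ᵥ x = x i0 := by
      simp only [dotProduct, he]
      rw [Finset.sum_eq_single i0]
      · simp [hi0]
      · intro b _ hb
        have : ¬ b.val = 0 := fun h => hb (Fin.ext h)
        simp [this]
      · simp
    rw [hM, Matrix.add_mulVec, Matrix.add_mulVec, dotProduct_add, dotProduct_add,
      hmvv, hmvv, hxe, hex]
    have hdiag : dotProduct (star x) (Matrix.diagonal c *ᵥ x) = ∑ i, c i * x i ^ 2 := by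
      simp only [star_trivial, dotProduct, mulVec_diagonal]
      apply Finset.sum_congr rfl; intro i _; ring
    rw [hdiag]
    set A := ∑ i, x i ^ 2 with hA
    have hApos : 0 < A := by
      obtain ⟨i, hi⟩ := Function.ne_iff.mp hx
      apply Finset.sum_pos' (fun i _ => sq_nonneg _) ⟨i, Finset.mem_univ i, pow_two_pos_of_ne_zero hi⟩
    have hcA : (p : ℝ) * A ≤ ∑ i, c i * x i ^ 2 := by
      rw [hA, Finset.mul_sum]
      exact Finset.sum_le_sum fun i _ => mul_le_mul_of_nonneg_right (hc i) (sq_nonneg _)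
    have hx0A : x i0 ^ 2 ≤ A := by
      rw [hA]
      exact Finset.single_le_sum (fun i _ => sq_nonneg (x i)) (Finset.mem_univ i0)
    have hvx : |v ⬝ᵥ x| ≤ (1/2) * ∑ i, |x i| := by
      calc |v ⬝ᵥ x| ≤ ∑ i, |v i * x i| := Finset.abs_sum_le_sum_abs _ _
        _ ≤ ∑ i, (1/2) * |x i| := by
            apply Finset.sum_le_sum; intro i _
            rw [abs_mul]
            exact mul_le_mul_of_nonneg_right (hv i) (abs_nonneg _)
        _ = (1/2) * ∑ i, |x i| := by rw [Finset.mul_sum]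
    have hsum_abs : |x i0| * ∑ i, |x i| ≤ ((p : ℝ) * x i0 ^ 2 + A) / 2 := by
      rw [Finset.mul_sum, hA]
      have : ∀ i : Fin p, |x i0| * |x i| ≤ (x i0 ^ 2 + x i ^ 2) / 2 := by
        intro i
        nlinarith [sq_nonneg (|x i0| - |x i|), sq_abs (x i0), sq_abs (x i)]
      calc ∑ i, |x i0| * |x i| ≤ ∑ i, (x i0 ^ 2 + x i ^ 2) / 2 :=
            Finset.sum_le_sum fun i _ => this i
        _ = ((p : ℝ) * x i0 ^ 2 + ∑ i, x i ^ 2) / 2 := by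
            rw [← Finset.sum_div]
            congr 1
            rw [Finset.sum_add_distrib, Finset.sum_const, Finset.card_univ, Fintype.card_fin,
              nsmul_eq_mul]
    have hxabs : 0 ≤ |x i0| := abs_nonneg _
    have hcross : |(x ⬝ᵥ v) * x i0 + x i0 * (v ⬝ᵥ x)| ≤ ((p:ℝ) + 1) / 2 * A := by
      have hxv : x ⬝ᵥ v = v ⬝ᵥ x := dotProduct_comm x v
      rw [hxv]
      have : (v ⬝ᵥ x) * x i0 + x i0 * (v ⬝ᵥ x) = 2 * (x i0 * (v ⬝ᵥ x)) := by ring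
      rw [this, abs_mul, abs_mul]
      have h2 : |(2:ℝ)| = 2 := by norm_num
      rw [h2]
      have hb1 : |x i0| * |v ⬝ᵥ x| ≤ |x i0| * ((1/2) * ∑ i, |x i|) :=
        mul_le_mul_of_nonneg_left hvx hxabs
      have hb2 : |x i0| * ((1/2) * ∑ i, |x i|) = (1/2) * (|x i0| * ∑ i, |x i|) := by ring
      have hsumabs_nonneg : (0:ℝ) ≤ ∑ i, |x i| :=
        Finset.sum_nonneg fun i _ => abs_nonneg _
      nlinarith [hsum_abs, hx0A]
    have hp5 : (5:ℝ) ≤ (p:ℝ) := by exact_mod_cast hp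
    nlinarith [abs_le.mp hcross, hcA, hApos]

lemma VarMk_sparse (p : ℕ) (hp : 0 < p) (c v : Fin p → ℝ) :
    {ij : Fin p × Fin p | ij.1 < ij.2 ∧ VarMk p c v ij.1 ij.2 ≠ 0}.ncard
      ≤ {j : Fin p | v j ≠ 0}.ncard := by
  classical
  set i0 : Fin p := ⟨0, hp⟩ with hi0
  have hsub : {ij : Fin p × Fin p | ij.1 < ij.2 ∧ VarMk p c v ij.1 ij.2 ≠ 0}
      ⊆ (fun j => (i0, j)) '' {j : Fin p | v j ≠ 0} := by
    rintro ⟨i, j⟩ ⟨hlt, hne⟩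
    simp only [VarMk, Matrix.of_apply] at hne
    have hij : i ≠ j := ne_of_lt hlt
    have hj0 : ¬ j.val = 0 := by
      intro h
      exact absurd hlt (by simp [Fin.lt_def, h])
    rw [if_neg hij, if_neg hj0] at hne
    by_cases hi : i.val = 0
    · rw [if_pos hi] at hne
      exact ⟨j, hne, by simp [Prod.ext_iff, hi0, Fin.ext_iff, hi.symm]⟩
    · rw [if_neg hi] at hne; exact absurd rfl hne
  calc _ ≤ ((fun j => (i0, j)) '' {j : Fin p | v j ≠ 0}).ncard :=
        Set.ncard_le_ncard hsub (Set.toFinite _)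
    _ = {j : Fin p | v j ≠ 0}.ncard :=
        Set.ncard_image_of_injective _ (fun a b h => (Prod.ext_iff.mp h).2)

noncomputable def VarV1 (p : ℕ) (j : Fin p) : ℝ := if 0 < j.val ∧ j.val ≤ p / 2 then -(1/2) else 0
noncomputable def VarV2 (p : ℕ) (j : Fin p) : ℝ := if p / 2 < j.val then 1/2 else 0
def VarC1 (p : ℕ) (_ : Fin p) : ℝ := (p : ℝ)
def VarC2 (p : ℕ) (i : Fin p) : ℝ := if i.val = 0 then (p : ℝ) + 1 else (p : ℝ)


lemma VarKey (p : ℕ) (i j : Fin p) :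
    VarMk p (VarC2 p) (VarV2 p) i j = VarMk p (VarC1 p) (VarV1 p) i j
      + (if i.val = 0 then (1:ℝ)/2 else 0) + (if j.val = 0 then (1:ℝ)/2 else 0) := by
  have hvdiff : ∀ k : Fin p, k.val ≠ 0 → VarV2 p k = VarV1 p k + 1/2 := by
    intro k hk
    unfold VarV1 VarV2
    by_cases h : k.val ≤ p / 2
    · rw [if_neg (by omega), if_pos ⟨Nat.pos_of_ne_zero hk, h⟩]; norm_num
    · rw [if_pos (by omega), if_neg (fun hc => h hc.2)]; norm_num
  unfold VarMk VarC1 VarC2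
  simp only [Matrix.of_apply]
  by_cases hij : i = j
  · subst hij
    by_cases hi0 : i.val = 0 <;> simp [hi0] <;> ring
  · rw [if_neg hij, if_neg hij]
    by_cases hi0 : i.val = 0
    · have hj0 : ¬ j.val = 0 := fun h => hij (Fin.ext (hi0.trans h.symm))
      rw [if_pos hi0, if_pos hi0, if_pos hi0, if_neg hj0, hvdiff j hj0]; ring
    · rw [if_neg hi0, if_neg hi0, if_neg hi0]
      by_cases hj0 : j.val = 0
      · rw [if_pos hj0, if_pos hj0, if_pos hj0, hvdiff i hi0]; ring
      · rw [if_neg hj0, if_neg hj0, if_neg hj0]; ring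

/-- Necessity direction of Proposition 2: if `s ≥ (p−1)/2`, there exist two distinct
symmetric positive definite matrices with at most `s` nonzero strictly upper-triangular
entries having the same variation matrix `T(Ω) = ω1ᵀ + 1ωᵀ − 2Ω`. -/
theorem variation_matrix_nonidentifiability (p : ℕ) (hp : 5 ≤ p) (s : ℕ)
    (hs : ((p : ℝ) - 1) / 2 ≤ s) :
    ∃ Ω₁ Ω₂ : Matrix (Fin p) (Fin p) ℝ, Ω₁.PosDef ∧ Ω₂.PosDef ∧
      {ij : Fin p × Fin p | ij.1 < ij.2 ∧ Ω₁ ij.1 ij.2 ≠ 0}.ncard ≤ s ∧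
      {ij : Fin p × Fin p | ij.1 < ij.2 ∧ Ω₂ ij.1 ij.2 ≠ 0}.ncard ≤ s ∧
      Ω₁ ≠ Ω₂ ∧
      ∀ i j, Ω₁ i i + Ω₁ j j - 2 * Ω₁ i j = Ω₂ i i + Ω₂ j j - 2 * Ω₂ i j := by
  classical
  have hp0 : 0 < p := by omega
  have hps : p ≤ 2 * s + 1 := by
    have h1 : (p : ℝ) ≤ 2 * s + 1 := by linarith
    exact_mod_cast h1
  refine ⟨VarMk p (VarC1 p) (VarV1 p), VarMk p (VarC2 p) (VarV2 p), ?_, ?_, ?_, ?_, ?_, ?_⟩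
  · exact VarMk_posDef p hp _ _ (fun i => le_refl _)
      (fun j hj => by unfold VarV1; rw [if_neg (by omega)])
      (fun j => by
        unfold VarV1
        by_cases h : 0 < j.val ∧ j.val ≤ p / 2
        · rw [if_pos h, abs_le]; constructor <;> norm_num
        · rw [if_neg h]; norm_num)
  · exact VarMk_posDef p hp _ _
      (fun i => by
        unfold VarC2
        by_cases h : i.val = 0
        · rw [if_pos h]; linarith
        · rw [if_neg h])
      (fun j hj => by unfold VarV2; rw [if_neg (by omega)])
      (fun j => by
        unfold VarV2
        by_cases h : p / 2 < j.val
        · rw [if_pos h, abs_le]; constructor <;> norm_num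
        · rw [if_neg h]; norm_num)
  · -- sparsity of Ω₁ : at most p/2 nonzero entries
    refine (VarMk_sparse p hp0 _ _).trans ?_
    have hsub : {j : Fin p | VarV1 p j ≠ 0} ⊆ Fin.val ⁻¹' (Set.Ioc 0 (p / 2)) := by
      intro j hj
      simp only [Set.mem_setOf_eq] at hj
      by_cases h : 0 < j.val ∧ j.val ≤ p / 2
      · exact h
      · unfold VarV1 at hj; rw [if_neg h] at hj; exact absurd rfl hj
    calc _ ≤ (Set.Ioc 0 (p / 2)).ncard :=
          Set.ncard_le_ncard_of_injOn Fin.val (fun a ha => hsub ha)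
            (Fin.val_injective.injOn) (by
              rw [← Finset.coe_Ioc]; exact (Finset.Ioc 0 (p/2)).finite_toSet)
      _ ≤ s := by
          rw [← Finset.coe_Ioc, Set.ncard_coe_finset, Nat.card_Ioc]; omega
  · -- sparsity of Ω₂ : at most p - p/2 - 1 nonzero entries
    refine (VarMk_sparse p hp0 _ _).trans ?_
    have hsub : {j : Fin p | VarV2 p j ≠ 0} ⊆ Fin.val ⁻¹' (Set.Ioo (p / 2) p) := by
      intro j hj
      simp only [Set.mem_setOf_eq] at hj
      by_cases h : p / 2 < j.val
      · exact ⟨h, j.isLt⟩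
      · unfold VarV2 at hj; rw [if_neg h] at hj; exact absurd rfl hj
    calc _ ≤ (Set.Ioo (p / 2) p).ncard :=
          Set.ncard_le_ncard_of_injOn Fin.val (fun a ha => hsub ha)
            (Fin.val_injective.injOn) (by
              rw [← Finset.coe_Ioo]; exact (Finset.Ioo (p/2) p).finite_toSet)
      _ ≤ s := by
          rw [← Finset.coe_Ioo, Set.ncard_coe_finset, Nat.card_Ioo]; omega
  · -- the two matrices differ at entry (0,0)
    intro h
    have h00 := congrFun (congrFun h ⟨0, hp0⟩) ⟨0, hp0⟩
    simp only [VarMk, Matrix.of_apply, if_pos rfl, VarC1, VarC2] at h00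
    norm_num at h00
  · -- same variation matrix
    intro i j
    rw [VarKey p i i, VarKey p j j, VarKey p i j]
    ring
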